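/- Let `t` be a valid Patricia trie and `π` a position with `subtreeAt t π = some (node s c₀ c₁)` where for some bit `b` the child `c_b` equals `leaf v_d`; write `u'` for the other child. Suppose neither of `lbl u'` and `v_i` is a prefix of the other, and that whenever `π = π₀ ++ [i]` is nonempty with `subtreeAt t π₀ = some (node s₀ l₀ r₀)`, the string `s₀ ++ [i]` is a prefix of `v_i`. Then `replaceAt t π (join u' (leaf v_i))` is valid and `leafLabels (replaceAt t π (join u' (leaf v_i))) = (leafLabels t \ {v_d}) ∪ {v_i}`. (Special cases 2–3 of the paper's replace operation: Case 5 of Invariant 1 and Case 2 of Lemma `successful-special-mov-lem`.) -/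
import Mathlib


inductive PTrie : Type
  | leaf (s : List Bool) : PTrie
  | node (s : List Bool) (l r : PTrie) : PTrie

/-- Label at the root of a trie. -/
def lbl : PTrie → List Bool
  | .leaf s => s
  | .node s _ _ => s

/-- A trie is valid if for every internal node `node s l r`,
`s ++ [false]` is a prefix of `lbl l` and `s ++ [true]` is a prefix of `lbl r`. -/
def Valid : PTrie → Prop
  | .leaf _ => True
  | .node s l r => ((s ++ [false]) <+: lbl l) ∧ ((s ++ [true]) <+: lbl r) ∧ Valid l ∧ Valid r

/-- Subtree at a position: descend left on `false`, right on `true`. -/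
def subtreeAt : PTrie → List Bool → Option PTrie
  | t, [] => some t
  | .leaf _, _ :: _ => none
  | .node _ l r, b :: π => subtreeAt (if b then r else l) π

/-- Set of binary strings appearing at the leaves. -/
def leafLabels : PTrie → Set (List Bool)
  | .leaf s => {s}
  | .node _ l r => leafLabels l ∪ leafLabels r

/-- Sequential search. -/
def search (v : List Bool) : PTrie → PTrie
  | .leaf s => .leaf s
  | .node s l r =>
    if s <+: v ∧ s ≠ v then
      (if v.getD s.length false then search v r else search v l)
    else .node s l r

/-- Position of the node returned by `search`. -/
def searchPos (v : List Bool) : PTrie → List Bool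
  | .leaf _ => []
  | .node s l r =>
    if s <+: v ∧ s ≠ v then
      (if v.getD s.length false then true :: searchPos v r else false :: searchPos v l)
    else []

/-- Replace the subtree at a position. -/
def replaceAt : PTrie → List Bool → PTrie → PTrie
  | _, [], u => u
  | .leaf s, _ :: _, _ => .leaf s
  | .node s l r, b :: π, u =>
    if b then .node s l (replaceAt r π u) else .node s (replaceAt l π u) r

/-- Longest common prefix of two binary strings. -/
def lcp : List Bool → List Bool → List Bool
  | a :: as, b :: bs => if a = b then a :: lcp as bs else []
  | _, _ => []

/-- Join two tries under a new internal node labelled by the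
longest common prefix of their labels. -/
def join (t₁ t₂ : PTrie) : PTrie :=
  if (lbl t₁).getD (lcp (lbl t₁) (lbl t₂)).length true then
    .node (lcp (lbl t₁) (lbl t₂)) t₂ t₁
  else
    .node (lcp (lbl t₁) (lbl t₂)) t₁ t₂

/-- Sequential insert. -/
def insertT (v : List Bool) : PTrie → PTrie
  | .node s l r =>
    if s <+: v ∧ s ≠ v then
      (if v.getD s.length false then .node s l (insertT v r) else .node s (insertT v l) r)
    else join (.node s l r) (.leaf v)
  | .leaf s => join (.leaf s) (.leaf v)

lemma lcp_prefix_left : ∀ a b : List Bool, lcp a b <+: a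
  | [], _ => by simp [lcp]
  | _ :: _, [] => by simp [lcp]
  | a :: as, b :: bs => by
    by_cases h : a = b
    · simpa [lcp, h, List.cons_prefix_cons] using lcp_prefix_left as bs
    · simp [lcp, h]

lemma prefix_lcp : ∀ {p a b : List Bool}, p <+: a → p <+: b → p <+: lcp a b
  | [], _, _, _, _ => by simp
  | x :: p, a, b, ha, hb => by
    obtain ⟨a', rfl, ha'⟩ : ∃ a', a = x :: a' ∧ p <+: a' := by
      cases a with
      | nil => simp at ha
      | cons y a' => rw [List.cons_prefix_cons] at ha; exact ⟨a', by simp [ha.1], ha.2⟩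
    obtain ⟨b', rfl, hb'⟩ : ∃ b', b = x :: b' ∧ p <+: b' := by
      cases b with
      | nil => simp at hb
      | cons y b' => rw [List.cons_prefix_cons] at hb; exact ⟨b', by simp [hb.1], hb.2⟩
    simpa [lcp, List.cons_prefix_cons] using prefix_lcp ha' hb'

lemma lcp_spec : ∀ (a b : List Bool), ¬ a <+: b → ¬ b <+: a →
    ∃ x, (lcp a b ++ [x]) <+: a ∧ (lcp a b ++ [!x]) <+: b
  | [], b, h1, _ => absurd (List.nil_prefix) h1
  | a :: as, [], _, h2 => absurd (List.nil_prefix) h2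
  | a :: as, b :: bs, h1, h2 => by
    by_cases h : a = b
    · subst h
      obtain ⟨x, hx1, hx2⟩ := lcp_spec as bs
        (fun hc => h1 (by simp [List.cons_prefix_cons, hc]))
        (fun hc => h2 (by simp [List.cons_prefix_cons, hc]))
      exact ⟨x, by simp [lcp, List.cons_prefix_cons, hx1, hx2]⟩
    · have hab : (!a) = b := by revert h; cases a <;> cases b <;> simp
      subst hab
      refine ⟨a, ?_, ?_⟩ <;> cases a <;> simp [lcp, List.cons_prefix_cons]

lemma getD_of_prefix {p : List Bool} {x : Bool} {a : List Bool}
    (h : p ++ [x] <+: a) : a.getD p.length true = x := by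
  obtain ⟨r, rfl⟩ := h
  rw [List.append_assoc]
  simp [List.getD, List.getElem?_append_right (le_refl p.length)]

lemma join_spec (t₁ t₂ : PTrie) (h1 : ¬ lbl t₁ <+: lbl t₂) (h2 : ¬ lbl t₂ <+: lbl t₁)
    (v1 : Valid t₁) (v2 : Valid t₂) :
    Valid (join t₁ t₂) ∧ lbl (join t₁ t₂) = lcp (lbl t₁) (lbl t₂) ∧
      leafLabels (join t₁ t₂) = leafLabels t₁ ∪ leafLabels t₂ := by
  obtain ⟨x, hx1, hx2⟩ := lcp_spec (lbl t₁) (lbl t₂) h1 h2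
  have hg : (lbl t₁).getD (lcp (lbl t₁) (lbl t₂)).length true = x := getD_of_prefix hx1
  unfold join
  rw [hg]
  cases x with
  | false => simp_all [Valid, leafLabels, lbl]
  | true =>
    simp_all [Valid, leafLabels, lbl]
    exact Set.union_comm _ _

lemma lbl_prefix : ∀ (t : PTrie), Valid t → ∀ w ∈ leafLabels t, lbl t <+: w
  | .leaf s, _, w, hw => by
    simp [leafLabels] at hw; subst hw; simp [lbl]
  | .node s l r, hv, w, hw => by
    rcases hw with hw | hw
    · exact ((List.prefix_append s [false]).trans hv.1).trans (lbl_prefix l hv.2.2.1 w hw)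
    · exact ((List.prefix_append s [true]).trans hv.2.1).trans (lbl_prefix r hv.2.2.2 w hw)

lemma children_disjoint {s : List Bool} {l r : PTrie} (hv : Valid (PTrie.node s l r)) :
    ∀ w, w ∈ leafLabels l → w ∈ leafLabels r → False := by
  intro w h1 h2
  have p1 : s ++ [false] <+: w := hv.1.trans (lbl_prefix l hv.2.2.1 w h1)
  have p2 : s ++ [true] <+: w := hv.2.1.trans (lbl_prefix r hv.2.2.2 w h2)
  rcases List.prefix_or_prefix_of_prefix p1 p2 with h | h <;>
  · obtain ⟨c, hc⟩ := h
    rw [List.append_assoc] at hc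
    have := List.append_cancel_left hc
    simp at this

lemma valid_subtreeAt : ∀ (π : List Bool) (t n : PTrie),
    Valid t → subtreeAt t π = some n → Valid n
  | [], t, n, hv, hs => by simp [subtreeAt] at hs; subst hs; exact hv
  | b :: π, .leaf s, n, hv, hs => by simp [subtreeAt] at hs
  | b :: π, .node s l r, n, hv, hs => by
    cases b
    · exact valid_subtreeAt π l n hv.2.2.1 (by simpa [subtreeAt] using hs)
    · exact valid_subtreeAt π r n hv.2.2.2 (by simpa [subtreeAt] using hs)

lemma leafLabels_subtreeAt : ∀ (π : List Bool) (t n : PTrie),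
    subtreeAt t π = some n → leafLabels n ⊆ leafLabels t
  | [], t, n, hs => by simp [subtreeAt] at hs; subst hs; exact subset_rfl
  | b :: π, .leaf s, n, hs => by simp [subtreeAt] at hs
  | b :: π, .node s l r, n, hs => by
    cases b
    · exact (leafLabels_subtreeAt π l n (by simpa [subtreeAt] using hs)).trans
        (by simp [leafLabels])
    · exact (leafLabels_subtreeAt π r n (by simpa [subtreeAt] using hs)).trans
        (by simp [leafLabels])

lemma subtreeAt_append : ∀ (π₁ π₂ : List Bool) (t : PTrie),
    subtreeAt t (π₁ ++ π₂) = (subtreeAt t π₁).bind (subtreeAt · π₂)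
  | [], π₂, t => by simp [subtreeAt]
  | b :: π₁, π₂, .leaf s => by simp [subtreeAt]
  | b :: π₁, π₂, .node s l r => by
    simp only [List.cons_append, subtreeAt]
    exact subtreeAt_append π₁ π₂ _

lemma lbl_replaceAt_cons (t : PTrie) (b : Bool) (π : List Bool) (u : PTrie) :
    lbl (replaceAt t (b :: π) u) = lbl t := by
  cases t <;> cases b <;> simp [replaceAt, lbl]

lemma replace_aux : ∀ (π : List Bool) (t n u : PTrie),
    Valid t → subtreeAt t π = some n → Valid u →
    (∀ π₀ i s₀ l₀ r₀, π = π₀ ++ [i] →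
      subtreeAt t π₀ = some (PTrie.node s₀ l₀ r₀) → (s₀ ++ [i]) <+: lbl u) →
    Valid (replaceAt t π u) ∧
    leafLabels (replaceAt t π u) = (leafLabels t \ leafLabels n) ∪ leafLabels u
  | [], t, n, u, hv, hsub, hu, hp => by
    simp only [subtreeAt, Option.some.injEq] at hsub; subst hsub
    have hre : replaceAt t [] u = u := by cases t <;> rfl
    rw [hre]
    exact ⟨hu, by simp⟩
  | b :: π', .leaf s, n, u, hv, hsub, hu, hp => by simp [subtreeAt] at hsub
  | b :: π', .node s l r, n, u, hv, hsub, hu, hp => by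
    cases b
    · have hsub' : subtreeAt l π' = some n := by simpa [subtreeAt] using hsub
      have IH := replace_aux π' l n u hv.2.2.1 hsub' hu
        (fun π₀ i s₀ l₀ r₀ he hs =>
          hp (false :: π₀) i s₀ l₀ r₀ (by rw [he]; rfl) (by simpa [subtreeAt] using hs))
      have hlbl : (s ++ [false]) <+: lbl (replaceAt l π' u) := by
        cases π' with
        | nil => simpa [replaceAt] using hp [] false s l r rfl (by simp [subtreeAt])
        | cons b'' rest => rw [lbl_replaceAt_cons]; exact hv.1
      constructor
      · exact ⟨hlbl, hv.2.1, IH.1, hv.2.2.2⟩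
      · have hNL : leafLabels n ⊆ leafLabels l := leafLabels_subtreeAt π' l n hsub'
        have hdis := children_disjoint hv
        show leafLabels (replaceAt l π' u) ∪ leafLabels r = _
        rw [IH.2]
        ext w
        have h1 : w ∈ leafLabels n → w ∈ leafLabels l := fun h => hNL h
        have h2 := hdis w
        simp only [Set.mem_union, Set.mem_diff, leafLabels]
        tauto
    · have hsub' : subtreeAt r π' = some n := by simpa [subtreeAt] using hsub
      have IH := replace_aux π' r n u hv.2.2.2 hsub' hu
        (fun π₀ i s₀ l₀ r₀ he hs =>
          hp (true :: π₀) i s₀ l₀ r₀ (by rw [he]; rfl) (by simpa [subtreeAt] using hs))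
      have hlbl : (s ++ [true]) <+: lbl (replaceAt r π' u) := by
        cases π' with
        | nil => simpa [replaceAt] using hp [] true s l r rfl (by simp [subtreeAt])
        | cons b'' rest => rw [lbl_replaceAt_cons]; exact hv.2.1
      constructor
      · exact ⟨hv.1, hlbl, hv.2.2.1, IH.1⟩
      · have hNL : leafLabels n ⊆ leafLabels r := leafLabels_subtreeAt π' r n hsub'
        have hdis := children_disjoint hv
        show leafLabels l ∪ leafLabels (replaceAt r π' u) = _
        rw [IH.2]
        ext w
        have h1 : w ∈ leafLabels n → w ∈ leafLabels r := fun h => hNL h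
        have h2 := hdis w
        simp only [Set.mem_union, Set.mem_diff, leafLabels]
        tauto

/-- Special cases 2–3 of the replace operation. -/
theorem replace_special_case23 (t c₀ c₁ : PTrie) (s vd vi : List Bool)
    (π : List Bool) (b : Bool)
    (hv : Valid t)
    (hsub : subtreeAt t π = some (PTrie.node s c₀ c₁))
    (hb : (if b then c₁ else c₀) = PTrie.leaf vd)
    (hinc1 : ¬ (lbl (if b then c₀ else c₁) <+: vi))
    (hinc2 : ¬ (vi <+: lbl (if b then c₀ else c₁)))
    (hparent : ∀ (π₀ : List Bool) (i : Bool) (s₀ : List Bool) (l₀ r₀ : PTrie),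
        π = π₀ ++ [i] → subtreeAt t π₀ = some (PTrie.node s₀ l₀ r₀) →
        (s₀ ++ [i]) <+: vi) :
    Valid (replaceAt t π (join (if b then c₀ else c₁) (PTrie.leaf vi))) ∧
    leafLabels (replaceAt t π (join (if b then c₀ else c₁) (PTrie.leaf vi))) =
      (leafLabels t \ {vd}) ∪ {vi} := by
  set u' := (if b then c₀ else c₁) with hu'
  have hvn : Valid (PTrie.node s c₀ c₁) := valid_subtreeAt π t _ hv hsub
  have hvu' : Valid u' := by cases b <;> simp only [hu', if_true, if_false] <;>
    [exact hvn.2.2.2; exact hvn.2.2.1]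
  have hsu' : s <+: lbl u' := by
    cases b
    · exact (List.prefix_append s [true]).trans hvn.2.1
    · exact (List.prefix_append s [false]).trans hvn.1
  have hj := join_spec u' (PTrie.leaf vi) (by simpa [lbl] using hinc1)
    (by simpa [lbl] using hinc2) hvu' trivial
  set j := join u' (PTrie.leaf vi) with hjdef
  have hparent' : ∀ π₀ i s₀ l₀ r₀, π = π₀ ++ [i] →
      subtreeAt t π₀ = some (PTrie.node s₀ l₀ r₀) → (s₀ ++ [i]) <+: lbl j := by
    intro π₀ i s₀ l₀ r₀ he hs
    have hvi := hparent π₀ i s₀ l₀ r₀ he hs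
    have hst : subtreeAt t (π₀ ++ [i]) = some (PTrie.node s c₀ c₁) := he ▸ hsub
    rw [subtreeAt_append, hs] at hst
    have hv₀ : Valid (PTrie.node s₀ l₀ r₀) := valid_subtreeAt π₀ t _ hv hs
    have h2 : (s₀ ++ [i]) <+: s := by
      cases i
      · have hl : l₀ = PTrie.node s c₀ c₁ := by simpa [subtreeAt] using hst
        have h := hv₀.1
        rw [hl] at h
        simpa [lbl] using h
      · have hr : r₀ = PTrie.node s c₀ c₁ := by simpa [subtreeAt] using hst
        have h := hv₀.2.1
        rw [hr] at h
        simpa [lbl] using h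
    rw [hj.2.1]
    exact prefix_lcp (h2.trans hsu') (by simpa [lbl] using hvi)
  have main := replace_aux π t (PTrie.node s c₀ c₁) j hv hsub hj.1 hparent'
  refine ⟨main.1, ?_⟩
  rw [main.2, hj.2.2]
  have hLn : leafLabels (PTrie.node s c₀ c₁) = leafLabels u' ∪ {vd} := by
    cases b
    · have : c₀ = PTrie.leaf vd := by simpa using hb
      subst this
      simp only [hu', if_neg Bool.false_ne_true]
      show leafLabels (PTrie.leaf vd) ∪ leafLabels c₁ = _
      simp [leafLabels, Set.union_comm]
    · have : c₁ = PTrie.leaf vd := by simpa using hb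
      subst this
      simp only [hu', if_pos rfl]
      show leafLabels c₀ ∪ leafLabels (PTrie.leaf vd) = _
      simp [leafLabels]
  have hvdU : vd ∉ leafLabels u' := by
    intro hmem
    have hvdmem : vd ∈ leafLabels (if b then c₁ else c₀) := by rw [hb]; simp [leafLabels]
    cases b
    · exact children_disjoint hvn vd (by simpa using hvdmem) (by simpa [hu'] using hmem)
    · exact children_disjoint hvn vd (by simpa [hu'] using hmem) (by simpa using hvdmem)
  have hU'T : leafLabels u' ⊆ leafLabels t := by
    refine Set.Subset.trans ?_ (leafLabels_subtreeAt π t _ hsub)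
    rw [hLn]; exact Set.subset_union_left
  rw [hLn]
  ext w
  have h1 : w ∈ leafLabels u' → w ∈ leafLabels t := fun h => hU'T h
  have h2 : w ∈ leafLabels u' → w ≠ vd := fun h he => hvdU (he ▸ h)
  simp only [Set.mem_union, Set.mem_diff, Set.mem_singleton_iff, leafLabels]
  tauto
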